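/- Let F be a local field with ring of integers 𝔬, maximal ideal 𝔭, uniformizer ϖ, ℓ ≥ 1, a ∈ F^×, y ∈ F^{ℓ−1}. Let M = ĉ·x̄(y)·j_{1,ℓ}(diag(a,a⁻¹))·δ₀·ω' be the matrix with blocks (0 0 0 0 a; 0 −I_{ℓ−1} 0 0 −ay; 0 0 −1 0 0; 0 0 0 −I_{ℓ−1} 0; a⁻¹ 0 0 y' 0). Suppose M = u·g_χ·k where u is upper unitriangular, g_χ = (0 0 ϖ⁻¹; 0 −I_{2ℓ−1} 0; ϖ 0 0) in block form, and k has all entries in 𝔬 with (1,1) entry in 1 + 𝔭. Then a⁻¹ ∈ ϖ·(1+𝔭) and every entry of y lies in 𝔭. -/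
import Mathlib


open Matrix

/-- The block matrix `g_χ = (0 0 ϖ⁻¹; 0 −I_{2ℓ−1} 0; ϖ 0 0)`. -/
def gchiSO (F : Type*) [Field F] (l : ℕ) (ϖ : F) :
    Matrix (Fin (2 * l + 1)) (Fin (2 * l + 1)) F :=
  fun i j =>
    if (i : ℕ) = 0 ∧ (j : ℕ) = 2 * l then ϖ⁻¹
    else if (i : ℕ) = 2 * l ∧ (j : ℕ) = 0 then ϖ
    else if i = j ∧ 1 ≤ (i : ℕ) ∧ (i : ℕ) ≤ 2 * l - 1 then -1
    else 0

/-- The explicit matrix `M = ĉ·x̄(y)·j_{1,ℓ}(diag(a,a⁻¹))·δ₀·ω'` with blocks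
`(0 0 0 0 a; 0 −I_{ℓ−1} 0 0 −ay; 0 0 −1 0 0; 0 0 0 −I_{ℓ−1} 0; a⁻¹ 0 0 y' 0)`. -/
def M9 (F : Type*) [Field F] (l : ℕ) (a : F) (y : Fin (l - 1) → F) :
    Matrix (Fin (2 * l + 1)) (Fin (2 * l + 1)) F :=
  fun i j =>
    if (i : ℕ) = 0 ∧ (j : ℕ) = 2 * l then a
    else if h : (j : ℕ) = 2 * l ∧ 1 ≤ (i : ℕ) ∧ (i : ℕ) ≤ l - 1 then
      -(a * y ⟨(i : ℕ) - 1, by omega⟩)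
    else if (i : ℕ) = 2 * l ∧ (j : ℕ) = 0 then a⁻¹
    else if h' : (i : ℕ) = 2 * l ∧ l + 1 ≤ (j : ℕ) ∧ (j : ℕ) ≤ 2 * l - 1 then
      -y ⟨2 * l - 1 - (j : ℕ), by omega⟩
    else if i = j ∧ 1 ≤ (i : ℕ) ∧ (i : ℕ) ≤ 2 * l - 1 then -1
    else 0

/-- An element of `F` belongs to the maximal ideal `𝔭` of the valuation ring `O`. -/
def memP {F : Type*} [Field F] (O : ValuationSubring F) (x : F) : Prop :=
  ∃ p : O, p ∈ IsLocalRing.maximalIdeal O ∧ (p : F) = x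

set_option maxHeartbeats 1000000 in
/-- (Lemma 7.1.)  If `M = u·g_χ·k` with `u` upper unitriangular and `k` integral with
`(1,1)` entry in `1 + 𝔭`, then `a⁻¹ ∈ ϖ·(1 + 𝔭)` and every entry of `y` lies in `𝔭`. -/
theorem stmt12 (F : Type*) [Field F] (O : ValuationSubring F)
    (ϖ : F) (hϖO : ϖ ∈ O) (hϖ0 : ϖ ≠ 0)
    (hϖgen : Ideal.span {(⟨ϖ, hϖO⟩ : O)} = IsLocalRing.maximalIdeal O)
    (l : ℕ) (hl : 1 ≤ l) (a : F) (ha : a ≠ 0) (y : Fin (l - 1) → F)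
    (u k : Matrix (Fin (2 * l + 1)) (Fin (2 * l + 1)) F)
    (hu_upper : ∀ i j : Fin (2 * l + 1), (j : ℕ) < (i : ℕ) → u i j = 0)
    (hu_diag : ∀ i : Fin (2 * l + 1), u i i = 1)
    (hk_int : ∀ i j : Fin (2 * l + 1), k i j ∈ O)
    (hk11 : memP O (k ⟨0, by omega⟩ ⟨0, by omega⟩ - 1))
    (heq : M9 F l a y = u * gchiSO F l ϖ * k) :
    (∃ w : F, memP O (w - 1) ∧ a⁻¹ = ϖ * w) ∧ ∀ i, memP O (y i) := by
  have hA : ∀ m : Fin (2 * l + 1),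
      (u * gchiSO F l ϖ) ⟨2 * l, by omega⟩ m = if (m : ℕ) = 0 then ϖ else 0 := by
    intro m
    rw [Matrix.mul_apply]
    rw [Finset.sum_eq_single (⟨2 * l, by omega⟩ : Fin (2 * l + 1))]
    · rw [hu_diag, one_mul]
      unfold gchiSO
      by_cases hm : (m : ℕ) = 0
      · rw [if_neg (fun hc => by have : 2 * l = 0 := hc.1; omega),
          if_pos ⟨rfl, hm⟩, if_pos hm]
      · rw [if_neg (fun hc => by have : 2 * l = 0 := hc.1; omega),
          if_neg (fun hc => hm hc.2),
          if_neg (fun hc => by have : 2 * l ≤ 2 * l - 1 := hc.2.2; omega),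
          if_neg hm]
    · intro b _ hb
      have hb' : (b : ℕ) ≠ 2 * l := fun hc => hb (Fin.ext hc)
      rw [hu_upper _ _ (show (b : ℕ) < 2 * l by omega), zero_mul]
    · intro h; exact absurd (Finset.mem_univ _) h
  have key : ∀ j : Fin (2 * l + 1),
      M9 F l a y ⟨2 * l, by omega⟩ j = ϖ * k ⟨0, by omega⟩ j := by
    intro j
    rw [heq, Matrix.mul_apply]
    rw [Finset.sum_congr rfl (fun m _ => by rw [hA m])]
    rw [Finset.sum_eq_single (⟨0, by omega⟩ : Fin (2 * l + 1))]
    · rw [if_pos rfl]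
    · intro b _ hb
      have hb' : (b : ℕ) ≠ 0 := fun hc => hb (Fin.ext hc)
      rw [if_neg hb', zero_mul]
    · intro h; exact absurd (Finset.mem_univ _) h
  constructor
  · refine ⟨k ⟨0, by omega⟩ ⟨0, by omega⟩, hk11, ?_⟩
    have h := key ⟨0, by omega⟩
    unfold M9 at h
    rw [if_neg (fun hc => by have : 2 * l = 0 := hc.1; omega),
      dif_neg (fun hc => by have : (0 : ℕ) = 2 * l := hc.1; omega),
      if_pos ⟨rfl, rfl⟩] at h
    exact h
  · intro i
    have hi : (i : ℕ) < l - 1 := i.2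
    have h := key ⟨2 * l - 1 - (i : ℕ), by omega⟩
    unfold M9 at h
    rw [if_neg (fun hc => by have : 2 * l = 0 := hc.1; omega),
      dif_neg (fun hc => by have : 2 * l - 1 - (i : ℕ) = 2 * l := hc.1; omega),
      if_neg (fun hc => by have : 2 * l - 1 - (i : ℕ) = 0 := hc.2; omega),
      dif_pos ⟨rfl, show l + 1 ≤ 2 * l - 1 - (i : ℕ) by omega,
        show 2 * l - 1 - (i : ℕ) ≤ 2 * l - 1 by omega⟩] at h
    have hfix : (⟨2 * l - 1 - (((⟨2 * l - 1 - (i : ℕ), by omega⟩ : Fin (2 * l + 1))) : ℕ),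
        show 2 * l - 1 - (2 * l - 1 - (i : ℕ)) < l - 1 by omega⟩ : Fin (l - 1)) = i :=
      Fin.ext (show 2 * l - 1 - (2 * l - 1 - (i : ℕ)) = (i : ℕ) by omega)
    rw [hfix] at h
    refine ⟨⟨ϖ, hϖO⟩ * (-⟨k ⟨0, by omega⟩ ⟨2 * l - 1 - (i : ℕ), by omega⟩, hk_int _ _⟩), ?_, ?_⟩
    · rw [← hϖgen]
      exact Ideal.mul_mem_right _ _ (Ideal.subset_span rfl)
    · push_cast
      rw [mul_neg, ← h, neg_neg]
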